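/- arXiv:2404.02301 — 4 statements merged into one kernel-verified Lean document; each statement's English description precedes it below -/
import Mathlib

section
/- Let q ≥ 3 and let d be an integer with s/2 < d < s. Let f ∈ S be a nonzero homogeneous polynomial of degree d all of whose monomials are squarefree. Then the number of zeros of f in the affine torus satisfies |V_T(f)| ≤ (q−1)^s − (q−2)^{s−d} (q−1)^d. -/
open MvPolynomial

/-- The affine torus `T = (K*)^s`: points of `K^s` with all coordinates nonzero. -/
abbrev Torus (s : ℕ) (K : Type) [Zero K] := {P : Fin s → K // ∀ i, P i ≠ 0}

/-- The evaluation map `f ↦ (f(P))_{P ∈ T}` as a linear map. -/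
noncomputable def evalTorus (s : ℕ) (K : Type) [Field K] :
    MvPolynomial (Fin s) K →ₗ[K] (Torus s K → K) :=
  LinearMap.pi fun P => (aeval (P.1 : Fin s → K)).toLinearMap

/-- The edge code of a hypergraph with edge set `E` on vertex set `{1,…,s}`:
the image under evaluation of the span of the squarefree monomials `∏_{j ∈ e} t_j`. -/
noncomputable def edgeCode (s : ℕ) (K : Type) [Field K] (E : Set (Finset (Fin s))) :
    Submodule K (Torus s K → K) :=
  (Submodule.span K ((fun e : Finset (Fin s) => ∏ j ∈ e, X j) '' E)).map (evalTorus s K)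

/-- Hamming weight of a word indexed by the torus. -/
noncomputable def wt {s : ℕ} {K : Type} [Field K] (c : Torus s K → K) : ℕ :=
  {P | c P ≠ 0}.ncard

/-- Minimum distance of a linear code: the least Hamming weight of a nonzero codeword. -/
noncomputable def minDist {s : ℕ} {K : Type} [Field K] (C : Submodule K (Torus s K → K)) : ℕ :=
  sInf {w : ℕ | ∃ c ∈ C, c ≠ 0 ∧ wt c = w}

set_option linter.unusedSectionVars false

namespace SqfreeAux

open Finset

variable {K : Type} [Field K] [Fintype K] [DecidableEq K]



lemma card_filter_ne_zero : (univ.filter fun a : K => a ≠ 0).card = Fintype.card K - 1 := by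
  rw [Finset.filter_ne', Finset.card_erase_of_mem (mem_univ 0), Finset.card_univ]

lemma card_filter_affine (b c : K) (hc : c ≠ 0) :
    Fintype.card K - 2 ≤ (univ.filter fun a : K => a ≠ 0 ∧ b + c * a ≠ 0).card := by
  have h1 : (univ.filter fun a : K => a ≠ 0) ⊆
      (univ.filter fun a : K => a ≠ 0 ∧ b + c * a ≠ 0) ∪ {-(b / c)} := by
    intro a ha
    simp only [mem_filter, mem_univ, true_and] at ha
    by_cases hb : b + c * a ≠ 0
    · exact mem_union_left _ (by simp [ha, hb])
    · push_neg at hb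
      have : a = -(b / c) := by field_simp; linear_combination hb
      simp [this]
  have h2 : (univ.filter fun a : K => a ≠ 0).card
      ≤ (univ.filter fun a : K => a ≠ 0 ∧ b + c * a ≠ 0).card + 1 :=
    (Finset.card_le_card h1).trans ((Finset.card_union_le _ _).trans (by simp))
  rw [card_filter_ne_zero] at h2
  omega

lemma card_filter_cons (s : ℕ) (Q : (Fin (s + 1) → K) → Prop) [DecidablePred Q] :
    (univ.filter fun P : Fin (s + 1) → K => Q P).card
      = ∑ p : Fin s → K, (univ.filter fun a : K => Q (Fin.cons a p)).card := by
  have hbij : Function.Bijective (fun x : K × (Fin s → K) => (Fin.cons x.1 x.2 : Fin (s+1) → K)) := by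
    refine Function.bijective_iff_has_inverse.mpr ⟨fun P => (P 0, Fin.tail P), fun x => ?_, fun P => ?_⟩
    · simp [Fin.tail_cons]
    · simp [Fin.cons_self_tail]
  calc (univ.filter fun P : Fin (s + 1) → K => Q P).card
      = ∑ P : Fin (s + 1) → K, if Q P then 1 else 0 := by rw [Finset.card_filter]
    _ = ∑ x : K × (Fin s → K), if Q (Fin.cons x.1 x.2) then 1 else 0 :=
        (Fintype.sum_bijective _ hbij _ _ (fun x => rfl)).symm
    _ = ∑ p : Fin s → K, ∑ a : K, if Q (Fin.cons a p) then 1 else 0 :=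
        Fintype.sum_prod_type_right _
    _ = ∑ p : Fin s → K, (univ.filter fun a : K => Q (Fin.cons a p)).card := by
        refine Finset.sum_congr rfl fun p _ => ?_
        rw [Finset.card_filter]

lemma eval_cons_eq (s : ℕ) (f : MvPolynomial (Fin (s + 1)) K) (hdeg : degreeOf 0 f ≤ 1)
    (a : K) (p : Fin s → K) :
    eval (Fin.cons a p : Fin (s + 1) → K) f
      = eval p ((finSuccEquiv K s f).coeff 0) + eval p ((finSuccEquiv K s f).coeff 1) * a := by
  rw [eval_eq_eval_mv_eval']
  rw [Polynomial.eval_eq_sum_range' (n := 2)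
    (lt_of_le_of_lt (Polynomial.natDegree_map_le.trans
      (by rw [natDegree_finSuccEquiv]; exact hdeg)) one_lt_two)]
  simp [Finset.sum_range_succ, Polynomial.coeff_map, mul_comm]

lemma totalDegree_le_of_ml {s : ℕ} (f : MvPolynomial (Fin s) K)
    (hml : ∀ m ∈ f.support, ∀ i, m i ≤ 1) : f.totalDegree ≤ s := by
  apply Finset.sup_le
  intro m hm
  calc m.sum (fun _ e => e) = ∑ i : Fin s, m i := Finsupp.sum_fintype _ _ (fun _ => rfl)
    _ ≤ ∑ _i : Fin s, 1 := Finset.sum_le_sum fun i _ => hml m hm i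
    _ = s := by simp

lemma torus_nonzeros_lb :
    ∀ (s e : ℕ), e ≤ s → ∀ f : MvPolynomial (Fin s) K, f ≠ 0 →
      (∀ m ∈ f.support, ∀ i, m i ≤ 1) → f.totalDegree ≤ e →
      (Fintype.card K - 2) ^ e * (Fintype.card K - 1) ^ (s - e)
        ≤ (univ.filter fun P : Fin s → K => (∀ i, P i ≠ 0) ∧ eval P f ≠ 0).card := by
  intro s
  induction s with
  | zero =>
    intro e he f hf0 _ _
    interval_cases e
    simp only [pow_zero, one_mul, Nat.zero_sub]
    obtain ⟨c, rfl⟩ := C_surjective (Fin 0) f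
    have hc : c ≠ 0 := fun h => hf0 (by simp [h])
    refine Nat.one_le_iff_ne_zero.mpr (Finset.card_ne_zero_of_mem (a := fun i : Fin 0 => (1:K)) ?_)
    simp only [mem_filter, mem_univ, true_and, eval_C]
    exact ⟨fun i => i.elim0, hc⟩
  | succ s ih =>
    intro e he f hf0 hml hdeg
    set q := Fintype.card K with hq
    have hd0 : degreeOf 0 f ≤ 1 := degreeOf_le_iff.mpr fun m hm => hml m hm 0
    set F := finSuccEquiv K s f with hF
    have hF0 : F ≠ 0 := by
      rw [hF, Ne, EmbeddingLike.map_eq_zero_iff]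
      exact hf0
    have hnat : F.natDegree ≤ 1 := by rw [hF, natDegree_finSuccEquiv]; exact hd0
    have hev : ∀ (a : K) (p : Fin s → K),
        eval (Fin.cons a p : Fin (s+1) → K) f = eval p (F.coeff 0) + eval p (F.coeff 1) * a :=
      fun a p => eval_cons_eq s f hd0 a p
    rw [card_filter_cons]
    by_cases hg0 : F.coeff 1 = 0
    · -- the variable 0 does not occur: f is essentially F.coeff 0
      have hh0 : F.coeff 0 ≠ 0 := by
        intro hh
        apply hF0
        apply Polynomial.ext
        intro n
        match n with
        | 0 => simpa using hh
        | 1 => simpa using hg0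
        | (n+2) =>
          rw [Polynomial.coeff_zero]
          exact Polynomial.coeff_eq_zero_of_natDegree_lt (lt_of_le_of_lt hnat (by omega))
      have hmlh : ∀ m ∈ (F.coeff 0).support, ∀ i, m i ≤ 1 := by
        intro m hm i
        have h1 : Finsupp.cons 0 m ∈ f.support := mem_support_coeff_finSuccEquiv.mp hm
        have := hml _ h1 i.succ
        rwa [Finsupp.cons_succ] at this
      have hdh : (F.coeff 0).totalDegree ≤ min e s := by
        refine le_min ?_ (totalDegree_le_of_ml _ hmlh)
        have := totalDegree_coeff_finSuccEquiv_add_le f 0 (by rw [← hF]; exact hh0)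
        rw [← hF] at this
        omega
      have hkey : ∀ p : Fin s → K,
          (if (∀ i, p i ≠ 0) ∧ eval p (F.coeff 0) ≠ 0 then q - 1 else 0)
            ≤ (univ.filter fun a : K =>
                (∀ i, (Fin.cons a p : Fin (s+1) → K) i ≠ 0) ∧ eval (Fin.cons a p : Fin (s+1) → K) f ≠ 0).card := by
        intro p
        split_ifs with hp
        · have hsub : (univ.filter fun a : K => a ≠ 0) ⊆
              univ.filter fun a : K =>
                (∀ i, (Fin.cons a p : Fin (s+1) → K) i ≠ 0) ∧ eval (Fin.cons a p : Fin (s+1) → K) f ≠ 0 := by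
            intro a ha
            simp only [mem_filter, mem_univ, true_and] at ha ⊢
            refine ⟨fun i => ?_, ?_⟩
            · refine Fin.cases ?_ ?_ i
              · simpa using ha
              · intro j; simpa using hp.1 j
            · rw [hev, hg0]
              simpa using hp.2
          calc q - 1 = (univ.filter fun a : K => a ≠ 0).card := card_filter_ne_zero.symm
            _ ≤ _ := Finset.card_le_card hsub
        · exact Nat.zero_le _
      have hsum : ∑ p : Fin s → K,
          (if (∀ i, p i ≠ 0) ∧ eval p (F.coeff 0) ≠ 0 then q - 1 else 0)
            ≤ ∑ p : Fin s → K, (univ.filter fun a : K =>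
                (∀ i, (Fin.cons a p : Fin (s+1) → K) i ≠ 0) ∧ eval (Fin.cons a p : Fin (s+1) → K) f ≠ 0).card :=
        Finset.sum_le_sum fun p _ => hkey p
      have hIH := ih (min e s) (min_le_right _ _) (F.coeff 0) hh0 hmlh hdh
      have hq21 : Fintype.card K - 2 ≤ q - 1 := by clear hkey hsum hIH; omega
      by_cases hes : e ≤ s
      · rw [min_eq_left hes] at hIH
        have h1 : s + 1 - e = (s - e) + 1 := by clear hkey hsum hIH; omega
        refine le_trans ?_ hsum
        rw [← Finset.sum_filter, Finset.sum_const, smul_eq_mul]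
        rw [h1, pow_succ, ← mul_assoc]
        exact Nat.mul_le_mul_right _ hIH
      · have h2 : e = s + 1 := le_antisymm he (Nat.not_le.mp hes)
        subst h2
        rw [min_eq_right (Nat.le_succ s), Nat.sub_self, pow_zero, mul_one] at hIH
        refine le_trans ?_ hsum
        rw [← Finset.sum_filter, Finset.sum_const, smul_eq_mul]
        rw [Nat.sub_self, pow_zero, mul_one, pow_succ]
        exact Nat.mul_le_mul hIH hq21
    · -- variable 0 occurs: use F.coeff 1
      have h1e : 1 ≤ e := by
        have := totalDegree_coeff_finSuccEquiv_add_le f 1 (by rw [← hF]; exact hg0)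
        rw [← hF] at this
        omega
      have hmlg : ∀ m ∈ (F.coeff 1).support, ∀ i, m i ≤ 1 := by
        intro m hm i
        have h1 : Finsupp.cons 1 m ∈ f.support := mem_support_coeff_finSuccEquiv.mp hm
        have := hml _ h1 i.succ
        rwa [Finsupp.cons_succ] at this
      have hdg : (F.coeff 1).totalDegree ≤ e - 1 := by
        have := totalDegree_coeff_finSuccEquiv_add_le f 1 (by rw [← hF]; exact hg0)
        rw [← hF] at this
        omega
      have hkey : ∀ p : Fin s → K,
          (if (∀ i, p i ≠ 0) ∧ eval p (F.coeff 1) ≠ 0 then q - 2 else 0)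
            ≤ (univ.filter fun a : K =>
                (∀ i, (Fin.cons a p : Fin (s+1) → K) i ≠ 0) ∧ eval (Fin.cons a p : Fin (s+1) → K) f ≠ 0).card := by
        intro p
        split_ifs with hp
        · have hsub : (univ.filter fun a : K =>
              a ≠ 0 ∧ eval p (F.coeff 0) + eval p (F.coeff 1) * a ≠ 0) ⊆
              univ.filter fun a : K =>
                (∀ i, (Fin.cons a p : Fin (s+1) → K) i ≠ 0) ∧ eval (Fin.cons a p : Fin (s+1) → K) f ≠ 0 := by
            intro a ha
            simp only [mem_filter, mem_univ, true_and] at ha ⊢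
            refine ⟨fun i => ?_, ?_⟩
            · refine Fin.cases ?_ ?_ i
              · simpa using ha.1
              · intro j; simpa using hp.1 j
            · rw [hev]
              exact ha.2
          exact le_trans (card_filter_affine _ _ hp.2) (Finset.card_le_card hsub)
        · exact Nat.zero_le _
      have hsum : ∑ p : Fin s → K,
          (if (∀ i, p i ≠ 0) ∧ eval p (F.coeff 1) ≠ 0 then q - 2 else 0)
            ≤ ∑ p : Fin s → K, (univ.filter fun a : K =>
                (∀ i, (Fin.cons a p : Fin (s+1) → K) i ≠ 0) ∧ eval (Fin.cons a p : Fin (s+1) → K) f ≠ 0).card :=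
        Finset.sum_le_sum fun p _ => hkey p
      have hIH := ih (e - 1) (by clear hkey hsum; omega) (F.coeff 1) hg0 hmlg hdg
      obtain ⟨e', rfl⟩ : ∃ e', e = e' + 1 := ⟨e - 1, by clear hkey hsum hIH; omega⟩
      simp only [Nat.add_sub_cancel] at hIH
      have hrew : s + 1 - (e' + 1) = s - e' := by clear hkey hsum hIH; omega
      refine le_trans ?_ hsum
      rw [← Finset.sum_filter, Finset.sum_const, smul_eq_mul]
      rw [hrew, pow_succ]
      calc (q - 2) ^ e' * (q - 2) * (q - 1) ^ (s - e')
          = ((q - 2) ^ e' * (q - 1) ^ (s - e')) * (q - 2) := by ring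
        _ ≤ _ := Nat.mul_le_mul_right _ hIH



variable {K : Type} [Field K] [Fintype K] [DecidableEq K]

noncomputable def dualPoly {s : ℕ} (f : MvPolynomial (Fin s) K) : MvPolynomial (Fin s) K :=
  ∑ m ∈ f.support, monomial (Finsupp.equivFunOnFinite.symm fun i => 1 - m i) (coeff m f)

lemma coeff_dualPoly {s : ℕ} (f : MvPolynomial (Fin s) K)
    (hml : ∀ m ∈ f.support, ∀ i, m i ≤ 1) (m₀ : Fin s →₀ ℕ) (hm₀ : m₀ ∈ f.support) :
    coeff (Finsupp.equivFunOnFinite.symm fun i => 1 - m₀ i) (dualPoly f) = coeff m₀ f := by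
  rw [dualPoly, coeff_sum, Finset.sum_eq_single m₀]
  · rw [coeff_monomial, if_pos rfl]
  · intro m hm hne
    rw [coeff_monomial, if_neg]
    intro hcontra
    apply hne
    have hfun : (fun i => 1 - m i) = (fun i => 1 - m₀ i) :=
      Finsupp.equivFunOnFinite.symm.injective hcontra
    ext i
    have h1 := hml m hm i
    have h2 := hml m₀ hm₀ i
    have h3 : 1 - m i = 1 - m₀ i := congrFun hfun i
    omega
  · intro h; exact absurd hm₀ h

lemma dualPoly_ne_zero {s : ℕ} (f : MvPolynomial (Fin s) K)
    (hml : ∀ m ∈ f.support, ∀ i, m i ≤ 1) (hf0 : f ≠ 0) : dualPoly f ≠ 0 := by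
  have hne : f.support ≠ ∅ := fun h => hf0 (support_eq_empty.mp h)
  obtain ⟨m₀, hm₀⟩ := Finset.nonempty_of_ne_empty hne
  intro h
  have := coeff_dualPoly f hml m₀ hm₀
  rw [h, coeff_zero] at this
  exact (mem_support_iff.mp hm₀) this.symm

lemma support_dualPoly_subset {s : ℕ} (f : MvPolynomial (Fin s) K) :
    ∀ m ∈ (dualPoly f).support, ∃ m' ∈ f.support,
      m = Finsupp.equivFunOnFinite.symm fun i => 1 - m' i := by
  intro m hm
  by_contra hc
  push_neg at hc
  rw [mem_support_iff] at hm
  apply hm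
  rw [dualPoly, coeff_sum]
  apply Finset.sum_eq_zero
  intro m' hm'
  rw [coeff_monomial, if_neg fun h => hc m' hm' h.symm]

lemma ml_dualPoly {s : ℕ} (f : MvPolynomial (Fin s) K) :
    ∀ m ∈ (dualPoly f).support, ∀ i, m i ≤ 1 := by
  intro m hm i
  obtain ⟨m', _, rfl⟩ := support_dualPoly_subset f m hm
  simp only [Finsupp.coe_equivFunOnFinite_symm]
  omega

lemma totalDegree_dualPoly {s d : ℕ} (f : MvPolynomial (Fin s) K)
    (hml : ∀ m ∈ f.support, ∀ i, m i ≤ 1) (hhom : f.IsHomogeneous d) :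
    (dualPoly f).totalDegree ≤ s - d := by
  apply Finset.sup_le
  intro m hm
  obtain ⟨m', hm', rfl⟩ := support_dualPoly_subset f m hm
  have hdeg : m'.degree = d := by
    by_contra h
    exact (mem_support_iff.mp hm') (hhom.coeff_eq_zero h)
  have hsum : ∑ i : Fin s, m' i = d := by
    rw [← hdeg, Finsupp.degree]
    exact (Finset.sum_subset (Finset.subset_univ _)
      (fun i _ hi => Finsupp.notMem_support_iff.mp hi)).symm
  have hcalc : (Finsupp.equivFunOnFinite.symm fun i => 1 - m' i).sum (fun _ e => e)
      = ∑ i : Fin s, (1 - m' i) := by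
    rw [Finsupp.sum_fintype _ _ fun _ => rfl]
    simp only [Finsupp.coe_equivFunOnFinite_symm]
  rw [hcalc]
  have h1 : ∑ i : Fin s, ((1 - m' i) + m' i) = s := by
    rw [Finset.sum_congr rfl fun i _ => (by have := hml m' hm' i; omega : (1 - m' i) + m' i = 1)]
    simp
  rw [Finset.sum_add_distrib] at h1
  omega

lemma eval_dualPoly {s : ℕ} (f : MvPolynomial (Fin s) K)
    (hml : ∀ m ∈ f.support, ∀ i, m i ≤ 1) (P : Fin s → K) (hP : ∀ i, P i ≠ 0) :
    eval P (dualPoly f) = (∏ i, P i) * eval (fun i => (P i)⁻¹) f := by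
  rw [dualPoly, map_sum, eval_eq' (fun i => (P i)⁻¹) f, Finset.mul_sum]
  apply Finset.sum_congr rfl
  intro m hm
  rw [eval_monomial, Finsupp.prod_fintype _ _ (fun i => pow_zero _)]
  simp only [Finsupp.coe_equivFunOnFinite_symm]
  rw [← mul_assoc, mul_comm (∏ i, P i) (coeff m f), mul_assoc]
  congr 1
  rw [← Finset.prod_mul_distrib]
  apply Finset.prod_congr rfl
  intro i _
  rcases Nat.le_one_iff_eq_zero_or_eq_one.mp (hml m hm i) with h | h <;> rw [h]
  · simp
  · simp [mul_inv_cancel₀ (hP i)]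

lemma card_nonzeros_dualPoly {s : ℕ} (f : MvPolynomial (Fin s) K)
    (hml : ∀ m ∈ f.support, ∀ i, m i ≤ 1) :
    (univ.filter fun P : Fin s → K => (∀ i, P i ≠ 0) ∧ eval P f ≠ 0).card
      = (univ.filter fun P : Fin s → K => (∀ i, P i ≠ 0) ∧ eval P (dualPoly f) ≠ 0).card := by
  refine Finset.card_bij' (fun P _ => fun i => (P i)⁻¹) (fun P _ => fun i => (P i)⁻¹)
    ?hi ?hj ?li ?ri
  case li => intro P _; funext i; exact inv_inv (P i)
  case ri => intro P _; funext i; exact inv_inv (P i)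
  · intro P hP
    simp only [mem_filter, mem_univ, true_and] at hP ⊢
    have hPnz : ∀ i, (P i)⁻¹ ≠ 0 := fun i => inv_ne_zero (hP.1 i)
    refine ⟨hPnz, ?_⟩
    rw [eval_dualPoly f hml _ hPnz]
    have hinv : (fun i => ((P i)⁻¹)⁻¹) = P := by
      funext i; exact inv_inv (P i)
    rw [hinv]
    exact mul_ne_zero (Finset.prod_ne_zero_iff.mpr fun i _ => hPnz i) hP.2
  · intro P hP
    simp only [mem_filter, mem_univ, true_and] at hP ⊢
    have hPnz : ∀ i, (P i)⁻¹ ≠ 0 := fun i => inv_ne_zero (hP.1 i)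
    refine ⟨hPnz, ?_⟩
    have := hP.2
    rw [eval_dualPoly f hml P hP.1] at this
    exact fun h => this (by rw [h, mul_zero])

lemma card_torus (s : ℕ) :
    (univ.filter fun P : Fin s → K => ∀ i, P i ≠ 0).card = (Fintype.card K - 1) ^ s := by
  have h1 : (univ.filter fun P : Fin s → K => ∀ i, P i ≠ 0)
      = Fintype.piFinset fun _ : Fin s => univ.filter fun a : K => a ≠ 0 := by
    ext P
    simp [Fintype.mem_piFinset]
  rw [h1, Fintype.card_piFinset]
  have h2 : (univ.filter fun a : K => a ≠ 0).card = Fintype.card K - 1 := by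
    rw [Finset.filter_ne', Finset.card_erase_of_mem (mem_univ 0), Finset.card_univ]
  rw [h2, Finset.prod_const, Finset.card_univ, Fintype.card_fin]


end SqfreeAux

/-- for `q ≥ 3` and `s/2 < d < s`, a nonzero homogeneous polynomial `f`
of degree `d` all of whose monomials are squarefree has at most
`(q-1)^s - (q-2)^{s-d} (q-1)^d` zeros in the affine torus. -/
theorem card_zeros_homogeneous_squarefree_le
    (q s d : ℕ) (hq : 3 ≤ q) (hlow : s < 2 * d) (hhigh : d < s)
    (K : Type) [Field K] [Fintype K] (hK : Fintype.card K = q)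
    (f : MvPolynomial (Fin s) K) (hf0 : f ≠ 0)
    (hhom : f.IsHomogeneous d)
    (hsquarefree : ∀ m ∈ f.support, ∀ i, m i ≤ 1) :
    {P : Torus s K | eval P.1 f = 0}.ncard
      ≤ (q - 1) ^ s - (q - 2) ^ (s - d) * (q - 1) ^ d := by
  classical
  letI : DecidableEq K := Classical.decEq K
  have hds : d ≤ s := le_of_lt hhigh
  have hdual_ne := SqfreeAux.dualPoly_ne_zero f hsquarefree hf0
  have hsd : s - (s - d) = d := by omega
  have hlb := SqfreeAux.torus_nonzeros_lb s (s - d) (Nat.sub_le s d)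
    (SqfreeAux.dualPoly f) hdual_ne (SqfreeAux.ml_dualPoly f)
    (SqfreeAux.totalDegree_dualPoly f hsquarefree hhom)
  rw [← SqfreeAux.card_nonzeros_dualPoly f hsquarefree] at hlb
  rw [hsd, hK] at hlb
  have eqv : {P : Torus s K | eval P.1 f ≠ 0} ≃
      {P : Fin s → K // (∀ i, P i ≠ 0) ∧ eval P f ≠ 0} :=
    { toFun := fun x => ⟨x.1.1, x.1.2, x.2⟩
      invFun := fun x => ⟨⟨x.1, x.2.1⟩, x.2.2⟩
      left_inv := fun x => rfl
      right_inv := fun x => rfl }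
  have hB : {P : Torus s K | eval P.1 f ≠ 0}.ncard
      = (Finset.univ.filter fun P : Fin s → K => (∀ i, P i ≠ 0) ∧ eval P f ≠ 0).card := by
    rw [← Nat.card_coe_set_eq, Nat.card_congr eqv, Nat.card_eq_fintype_card,
      Fintype.card_subtype]
  have hT : Nat.card (Torus s K) = (q - 1) ^ s := by
    rw [Nat.card_eq_fintype_card, Fintype.card_subtype, SqfreeAux.card_torus, hK]
  have hcompl : {P : Torus s K | eval P.1 f = 0} = {P : Torus s K | eval P.1 f ≠ 0}ᶜ := by
    ext P; simp
  have h1 : {P : Torus s K | eval P.1 f ≠ 0}.ncard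
      + ({P : Torus s K | eval P.1 f ≠ 0}ᶜ).ncard = (q - 1) ^ s := by
    rw [Set.ncard_add_ncard_compl, hT]
  have h2 : (q - 2) ^ (s - d) * (q - 1) ^ d ≤ {P : Torus s K | eval P.1 f ≠ 0}.ncard := by
    rw [hB]; exact hlb
  rw [hcompl, Nat.eq_sub_of_add_eq' h1]
  exact Nat.sub_le_sub_left h2 _
end

section
/- Let r be an integer with 2 ≤ r ≤ s, let i_1,…,i_r be distinct indices in {1,…,s}, let α_1,…,α_r be nonzero elements of K, and set f = α_1 t_{i_1} + ⋯ + α_r t_{i_r}. Then the number of zeros of f in the affine torus is |V_T(f)| = (q−1)^{s−1} − (q−1)^{s−2} + ⋯ + (−1)^r (q−1)^{s−(r−1)}, i.e. |V_T(f)| = Σ_{i=1}^{r−1} (−1)^{i−1} (q−1)^{s−i}. -/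
open MvPolynomial

section Aux
open Finset
variable {K : Type} [Field K] [Fintype K] [DecidableEq K]

lemma card_all_ne (n : ℕ) :
    (univ.filter fun z : Fin n → K => ∀ i, z i ≠ 0).card = (Fintype.card K - 1) ^ n := by
  have h : (univ.filter fun z : Fin n → K => ∀ i, z i ≠ 0)
      = Fintype.piFinset (fun _ : Fin n => univ.erase (0 : K)) := by
    ext z; simp [Fintype.mem_piFinset]
  rw [h, Fintype.card_piFinset]
  simp [Finset.card_erase_of_mem]

lemma step_rec (n : ℕ) (β : Fin (n+1) → K) (hβ : ∀ i, β i ≠ 0) :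
    (univ.filter fun y : Fin (n+1) → K => (∀ i, y i ≠ 0) ∧ ∑ i, β i * y i = 0).card
      + (univ.filter fun z : Fin n → K =>
          (∀ i, z i ≠ 0) ∧ ∑ i, β i.castSucc * z i = 0).card
      = (Fintype.card K - 1) ^ n := by
  have key : (univ.filter fun y : Fin (n+1) → K => (∀ i, y i ≠ 0) ∧ ∑ i, β i * y i = 0).card
      = (univ.filter fun z : Fin n → K =>
          (∀ i, z i ≠ 0) ∧ ¬ (∑ i, β i.castSucc * z i = 0)).card := by
    apply Finset.card_bij (fun y _ => Fin.init y)
    · intro y hy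
      simp only [mem_filter, mem_univ, true_and] at hy ⊢
      obtain ⟨h1, h2⟩ := hy
      rw [Fin.sum_univ_castSucc] at h2
      constructor
      · intro i; exact h1 _
      · intro hz
        have hz' : ∑ i : Fin n, β i.castSucc * y i.castSucc = 0 := hz
        rw [hz', zero_add] at h2
        exact mul_ne_zero (hβ _) (h1 _) h2
    · intro y hy y' hy' hEq
      simp only [mem_filter, mem_univ, true_and] at hy hy'
      rw [Fin.sum_univ_castSucc] at hy hy'
      have hinit : ∀ i : Fin n, y i.castSucc = y' i.castSucc := fun i => congrFun hEq i
      have hsum : ∑ i : Fin n, β i.castSucc * y i.castSucc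
          = ∑ i : Fin n, β i.castSucc * y' i.castSucc := by
        exact Finset.sum_congr rfl fun i _ => by rw [hinit i]
      have hlast : y (Fin.last n) = y' (Fin.last n) := by
        have := hy.2; have h2 := hy'.2
        rw [hsum] at this
        have : β (Fin.last n) * y (Fin.last n) = β (Fin.last n) * y' (Fin.last n) := by
          linear_combination this - h2
        exact mul_left_cancel₀ (hβ _) this
      funext j
      refine Fin.lastCases ?_ ?_ j
      · exact hlast
      · intro i; exact hinit i
    · intro z hz
      simp only [mem_filter, mem_univ, true_and] at hz
      obtain ⟨h1, h2⟩ := hz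
      refine ⟨Fin.snoc z (-(β (Fin.last n))⁻¹ * ∑ i : Fin n, β i.castSucc * z i), ?_, ?_⟩
      · simp only [mem_filter, mem_univ, true_and]
        constructor
        · intro j
          refine Fin.lastCases ?_ ?_ j
          · rw [Fin.snoc_last]
            exact mul_ne_zero (neg_ne_zero.mpr (inv_ne_zero (hβ _))) h2
          · intro i; rw [Fin.snoc_castSucc]; exact h1 i
        · rw [Fin.sum_univ_castSucc]
          simp only [Fin.snoc_castSucc, Fin.snoc_last]
          have : β (Fin.last n) * (-(β (Fin.last n))⁻¹ * ∑ i : Fin n, β i.castSucc * z i)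
              = -∑ i : Fin n, β i.castSucc * z i := by
            field_simp
            rw [div_self (hβ _)]
          rw [this, add_neg_cancel]
      · funext i
        simp [Fin.init, Fin.snoc_castSucc]
  rw [key]
  have h := Finset.card_filter_add_card_filter_not
    (s := univ.filter fun z : Fin n → K => ∀ i, z i ≠ 0)
    (p := fun z => ∑ i, β i.castSucc * z i = 0)
  rw [Finset.filter_filter, Finset.filter_filter] at h
  rw [card_all_ne] at h
  rw [add_comm]
  exact h


lemma count_lemma (n : ℕ) (β : Fin (n+1) → K) (hβ : ∀ i, β i ≠ 0) :
    ((univ.filter fun y : Fin (n+1) → K => (∀ i, y i ≠ 0) ∧ ∑ i, β i * y i = 0).card : ℤ)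
      = ∑ i ∈ Finset.range n, (-1) ^ i * ((Fintype.card K : ℤ) - 1) ^ (n - i) := by
  induction n with
  | zero =>
      have he : (univ.filter fun y : Fin 1 → K => (∀ i, y i ≠ 0) ∧ ∑ i, β i * y i = 0) = ∅ := by
        rw [Finset.filter_eq_empty_iff]
        rintro y - ⟨h1, h2⟩
        rw [Fin.sum_univ_one] at h2
        exact mul_ne_zero (hβ 0) (h1 0) h2
      rw [he]
      simp
  | succ n ih =>
      have hstep := step_rec (n+1) β hβ
      have ihb := ih (fun i => β i.castSucc) (fun i => hβ _)
      have h1 : (1 : ℕ) ≤ Fintype.card K := Fintype.card_pos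
      have hcast : ((univ.filter fun y : Fin (n+1+1) → K =>
            (∀ i, y i ≠ 0) ∧ ∑ i, β i * y i = 0).card : ℤ)
          + ((univ.filter fun z : Fin (n+1) → K =>
            (∀ i, z i ≠ 0) ∧ ∑ i, β i.castSucc * z i = 0).card : ℤ)
          = ((Fintype.card K : ℤ) - 1) ^ (n+1) := by
        have := congrArg (Nat.cast : ℕ → ℤ) hstep
        push_cast [Nat.cast_sub h1] at this
        exact this
      rw [Finset.sum_range_succ']
      have hterm : ∀ i ∈ Finset.range n,
          (-1 : ℤ) ^ (i+1) * ((Fintype.card K : ℤ) - 1) ^ (n + 1 - (i+1))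
            = -((-1) ^ i * ((Fintype.card K : ℤ) - 1) ^ (n - i)) := by
        intro i _
        rw [Nat.succ_sub_succ, pow_succ]
        ring
      rw [Finset.sum_congr rfl hterm, Finset.sum_neg_distrib, ← ihb]
      simp only [pow_zero, Nat.sub_zero, one_mul]
      linarith [hcast]

end Aux

/-- for `2 ≤ r ≤ s`, distinct indices `i_1,…,i_r` and nonzero coefficients
`α_1,…,α_r ∈ K`, the linear form `f = α_1 t_{i_1} + ⋯ + α_r t_{i_r}` satisfies
`|V_T(f)| = Σ_{i=1}^{r-1} (-1)^{i-1} (q-1)^{s-i}`. -/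
theorem card_zeros_linear_form
    (q s r : ℕ) (hr2 : 2 ≤ r) (hrs : r ≤ s)
    (K : Type) [Field K] [Fintype K] (hK : Fintype.card K = q)
    (ι : Fin r → Fin s) (hι : Function.Injective ι)
    (α : Fin r → K) (hα : ∀ i, α i ≠ 0) :
    ({P : Torus s K | eval P.1 (∑ i, C (α i) * X (ι i)) = 0}.ncard : ℤ)
      = ∑ i ∈ Finset.range (r - 1), (-1) ^ i * ((q : ℤ) - 1) ^ (s - (i + 1)) := by
  classical
  obtain ⟨n, rfl⟩ : ∃ n, r = n + 1 := ⟨r - 1, by omega⟩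
  have h1q : 1 ≤ q := hK ▸ Fintype.card_pos
  have hset : {P : Torus s K | eval P.1 (∑ i, C (α i) * X (ι i)) = 0}
      = {P : Torus s K | ∑ i, α i * P.1 (ι i) = 0} := by
    ext P
    simp [map_sum]
  rw [hset, ← Nat.card_coe_set_eq]
  have e1 : ↥{P : Torus s K | ∑ i, α i * P.1 (ι i) = 0}
      ≃ {P : Fin s → K // (∀ i, P i ≠ 0) ∧ ∑ i, α i * P (ι i) = 0} :=
    Equiv.subtypeSubtypeEquivSubtypeInter (fun P : Fin s → K => ∀ i, P i ≠ 0)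
      (fun P => ∑ i, α i * P (ι i) = 0)
  have hcardA : Nat.card {P : Fin s → K // (∀ i, P i ≠ 0) ∧ ∑ i, α i * P (ι i) = 0}
      = Nat.card {y : Fin (n+1) → K // (∀ i, y i ≠ 0) ∧ ∑ i, α i * y i = 0}
        * Nat.card {z : {j : Fin s // j ∉ Set.range ι} → K // ∀ j, z j ≠ 0} := by
    rw [← Nat.card_prod]
    refine Nat.card_eq_of_bijective
      (fun P => (⟨fun i => P.1 (ι i), fun i => P.2.1 _, P.2.2⟩,
        ⟨fun j => P.1 j.1, fun j => P.2.1 _⟩)) ⟨?_, ?_⟩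
    · rintro ⟨P, hP⟩ ⟨P', hP'⟩ hEq
      have hEq1 := congrArg (fun u => (u.1 : Fin (n+1) → K)) hEq
      have hEq2 := congrArg (fun u => (u.2 : {j : Fin s // j ∉ Set.range ι} → K)) hEq
      simp only at hEq1 hEq2
      apply Subtype.ext
      funext j
      by_cases hj : j ∈ Set.range ι
      · obtain ⟨i, rfl⟩ := hj
        exact congrFun hEq1 i
      · exact congrFun hEq2 ⟨j, hj⟩
    · rintro ⟨⟨y, hy1, hy2⟩, ⟨z, hz⟩⟩
      set P : Fin s → K := fun j => if h : ∃ i, ι i = j then y h.choose else z ⟨j, h⟩ with hPdef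
      have hPι : ∀ i, P (ι i) = y i := by
        intro i
        have hex : ∃ i', ι i' = ι i := ⟨i, rfl⟩
        rw [hPdef]
        simp only [dif_pos hex]
        exact congrArg y (hι hex.choose_spec)
      have hPj : ∀ (j : Fin s) (hj : j ∉ Set.range ι), P j = z ⟨j, hj⟩ := by
        intro j hj
        rw [hPdef]
        exact dif_neg hj
      refine ⟨⟨P, ?_, ?_⟩, ?_⟩
      · intro j
        by_cases hj : j ∈ Set.range ι
        · obtain ⟨i, rfl⟩ := hj
          rw [hPι]
          exact hy1 i
        · rw [hPj j hj]
          exact hz _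
      · calc ∑ i, α i * P (ι i) = ∑ i, α i * y i :=
              Finset.sum_congr rfl fun i _ => by rw [hPι]
          _ = 0 := hy2
      · refine Prod.ext ?_ ?_
        · apply Subtype.ext
          funext i
          exact hPι i
        · apply Subtype.ext
          funext j
          exact hPj j.1 j.2
  rw [Nat.card_congr e1, hcardA]
  have hB : (Nat.card {y : Fin (n+1) → K // (∀ i, y i ≠ 0) ∧ ∑ i, α i * y i = 0} : ℤ)
      = ∑ i ∈ Finset.range n, (-1) ^ i * ((q : ℤ) - 1) ^ (n - i) := by
    rw [Nat.card_eq_fintype_card, Fintype.card_subtype, count_lemma n α hα, hK]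
  have hJ : Nat.card {j : Fin s // j ∉ Set.range ι} = s - (n + 1) := by
    rw [Nat.card_eq_fintype_card, Fintype.card_subtype_compl]
    congr 1
    · exact Fintype.card_fin s
    · rw [← Nat.card_eq_fintype_card]
      have := Nat.card_range_of_injective hι
      simp only [Nat.card_eq_fintype_card, Fintype.card_fin] at this
      rw [Nat.card_eq_fintype_card]
      exact this
  have hCt : Nat.card {z : {j : Fin s // j ∉ Set.range ι} → K // ∀ j, z j ≠ 0}
      = (q - 1) ^ (s - (n + 1)) := by
    rw [Nat.card_congr (Equiv.subtypePiEquivPi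
      (β := fun _ : {j : Fin s // j ∉ Set.range ι} => K) (p := fun _ b => b ≠ 0)), Nat.card_fun, hJ]
    congr 1
    rw [Nat.card_congr unitsEquivNeZero.symm, Nat.card_eq_fintype_card, Fintype.card_units, hK]
  rw [hCt]
  push_cast [Nat.cast_sub h1q]
  rw [hB, Finset.sum_mul]
  show _ = ∑ i ∈ Finset.range (n + 1 - 1), (-1 : ℤ) ^ i * ((q : ℤ) - 1) ^ (s - (i + 1))
  refine Finset.sum_congr rfl fun i hi => ?_
  rw [Finset.mem_range] at hi
  rw [mul_assoc, ← pow_add]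
  have he : n - i + (s - (n + 1)) = s - (i + 1) := by
    clear hset e1 hcardA hB hJ hCt
    omega
  rw [he]
end

section
/- Let q ≥ 3 and let G be a connected tree on the vertex set {1,…,s} with s ≥ 3. Then the minimum distance of the edge code of G is δ(C_G) = (q−1)^s − (q−1)^{s−1} = (q−2)(q−1)^{s−1}. -/
open MvPolynomial

/-- The squarefree monomial `t_i t_j` attached to an edge `{i,j}` of a simple graph. -/
noncomputable def edgeMonSym2 (s : ℕ) (K : Type) [Field K] (e : Sym2 (Fin s)) :
    MvPolynomial (Fin s) K :=
  Sym2.lift ⟨fun i j => X i * X j, fun _ _ => mul_comm _ _⟩ e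

/-- The edge code of a simple graph on `{1,…,s}`. -/
noncomputable def graphCode (s : ℕ) (K : Type) [Field K] (G : SimpleGraph (Fin s)) :
    Submodule K (Torus s K → K) :=
  (Submodule.span K (edgeMonSym2 s K '' G.edgeSet)).map (evalTorus s K)

section Aux
open SimpleGraph

lemma walk_closed {V : Type} {G : SimpleGraph V} (S : Set V)
    (hS : ∀ ⦃a b⦄, a ∈ S → G.Adj a b → b ∈ S) {u z : V} (p : G.Walk u z) (hu : u ∈ S) :
    z ∈ S := by
  induction p with
  | nil => exact hu
  | cons h p ih => exact ih (hS hu h)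

/-- A connected graph on ≥ 3 vertices has a vertex with two distinct neighbors. -/
lemma exists_two_neighbors {V : Type} [Fintype V] [DecidableEq V] {G : SimpleGraph V}
    (hc : G.Connected) (h3 : 3 ≤ Fintype.card V) :
    ∃ a b c : V, G.Adj a b ∧ G.Adj a c ∧ b ≠ c := by
  by_contra hcon
  push_neg at hcon
  have hne : Nonempty V := Fintype.card_pos_iff.mp (by omega)
  obtain ⟨x⟩ := hne
  have h2 : 1 < Fintype.card V := by omega
  obtain ⟨x', hx'⟩ := Fintype.exists_ne_of_one_lt_card h2 x
  obtain ⟨w⟩ := hc.preconnected x x'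
  have hy : ∃ y, G.Adj x y := by
    cases w with
    | nil => exact absurd rfl hx'.symm
    | cons h p => exact ⟨_, h⟩
  obtain ⟨y, hy⟩ := hy
  -- exists z outside {x, y}
  have hzz : ∃ z : V, z ≠ x ∧ z ≠ y := by
    by_contra hz
    push_neg at hz
    have : (Finset.univ : Finset V) ⊆ {x, y} := by
      intro z _
      rcases eq_or_ne z x with h | h
      · simp [h]
      · simp [hz z h]
    have := Finset.card_le_card this
    simp only [Finset.card_univ] at this
    have : Fintype.card V ≤ 2 := le_trans this (Finset.card_insert_le _ _ |>.trans (by simp))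
    omega
  obtain ⟨z, hzx, hzy⟩ := hzz
  have hSclosed : ∀ ⦃a b : V⦄, a ∈ ({x, y} : Set V) → G.Adj a b → b ∈ ({x, y} : Set V) := by
    intro a b ha hab
    simp only [Set.mem_insert_iff, Set.mem_singleton_iff] at ha ⊢
    rcases ha with rfl | rfl
    · right; exact hcon a b y hab hy
    · left; exact hcon a b x hab hy.symm
  obtain ⟨w⟩ := hc.preconnected x z
  have := walk_closed _ hSclosed w (by left; rfl)
  rcases this with h | h
  · exact hzx h
  · exact hzy h

open SimpleGraph Walk in
/-- Leaf lemma: a nonempty subset of the edge set of an acyclic graph contains an edge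
`s(u,v)` such that `v` lies in no other edge of the subset. -/
lemma exists_leaf_edge {V : Type} [Fintype V] [DecidableEq V] {G : SimpleGraph V}
    (hac : G.IsAcyclic) {D : Set (Sym2 V)} (hD : D ⊆ G.edgeSet) (hne : D.Nonempty) :
    ∃ u v : V, s(u, v) ∈ D ∧ u ≠ v ∧ ∀ e ∈ D, v ∈ e → e = s(u, v) := by
  classical
  set H : SimpleGraph V := SimpleGraph.fromEdgeSet D with hH
  have hHG : H ≤ G := by
    rw [hH, ← SimpleGraph.fromEdgeSet_edgeSet (G := G)]
    exact SimpleGraph.fromEdgeSet_mono hD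
  have hadj : ∀ a b : V, H.Adj a b ↔ s(a, b) ∈ D := by
    intro a b
    rw [hH, SimpleGraph.fromEdgeSet_adj]
    exact ⟨fun h => h.1, fun h => ⟨h, (G.mem_edgeSet.mp (hD h)).ne⟩⟩
  have hHac : H.IsAcyclic := fun v c hc => hac (c.mapLe hHG) (hc.mapLe hHG)
  set L : Set ℕ := {n | ∃ (u v : V) (p : H.Walk u v), p.IsPath ∧ p.length = n} with hL
  have hbdd : BddAbove L := by
    refine ⟨Fintype.card V, ?_⟩
    rintro n ⟨u, v, p, hp, rfl⟩
    exact le_of_lt hp.length_lt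
  obtain ⟨a, b, hab⟩ : ∃ a b : V, s(a, b) ∈ D := by
    obtain ⟨e, he⟩ := hne
    induction e using Sym2.ind with
    | _ a b => exact ⟨a, b, he⟩
  have hab' : H.Adj a b := (hadj a b).mpr hab
  have h1L : 1 ∈ L := ⟨a, b, Walk.cons hab' Walk.nil, by simp [hab'.ne], rfl⟩
  have hnL : sSup L ∈ L := Nat.sSup_mem ⟨1, h1L⟩ hbdd
  set n := sSup L with hn
  have h1n : 1 ≤ n := le_csSup hbdd h1L
  obtain ⟨u, v, p, hp, hlen⟩ := hnL
  have huv : v ≠ u := by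
    rintro rfl
    have : p = Walk.nil := Walk.isPath_iff_eq_nil.mp hp
    rw [this] at hlen
    simp at hlen
    omega
  obtain ⟨w, hvw, q, hq⟩ := Walk.exists_eq_cons_of_ne huv p.reverse
  have hrp : (Walk.cons hvw q).IsPath := hq ▸ hp.reverse
  have hqpath : q.IsPath := (Walk.cons_isPath_iff _ _).mp hrp |>.1
  have hvq : v ∉ q.support := (Walk.cons_isPath_iff _ _).mp hrp |>.2
  have hrlen : (Walk.cons hvw q).length = n := by rw [← hq]; simp [hlen]
  -- key claim: the only H-neighbor of v is w
  have hkey : ∀ x : V, H.Adj v x → x = w := by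
    intro x hvx
    by_contra hxw
    by_cases hxs : x ∈ (Walk.cons hvw q).support
    · -- build a cycle
      rw [Walk.support_cons] at hxs
      have hxq : x ∈ q.support := by
        rcases List.mem_cons.mp hxs with h | h
        · exact absurd h hvx.ne'
        · exact h
      have hπ : (Walk.cons hvw (q.takeUntil x hxq)).IsPath := by
        refine (Walk.cons_isPath_iff _ _).mpr ⟨hqpath.takeUntil _, ?_⟩
        intro hv
        exact hvq (Walk.support_takeUntil_subset _ _ hv)
      have hcyc : (Walk.cons hvx.symm (Walk.cons hvw (q.takeUntil x hxq))).IsCycle := by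
        rw [Walk.cons_isCycle_iff]
        refine ⟨hπ, ?_⟩
        intro hmem
        rw [Walk.edges_cons, List.mem_cons] at hmem
        rcases hmem with h | h
        · rw [Sym2.eq_iff] at h
          rcases h with ⟨rfl, rfl⟩ | ⟨rfl, h2⟩
          · exact hvx.ne rfl
          · exact hxw rfl
        · exact hvq (Walk.support_takeUntil_subset _ _
            ((q.takeUntil x hxq).snd_mem_support_of_mem_edges h))
      exact hHac _ hcyc
    · -- extend the path, contradicting maximality
      have hext : (Walk.cons hvx.symm (Walk.cons hvw q)).IsPath :=
        (Walk.cons_isPath_iff _ _).mpr ⟨hrp, hxs⟩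
      have : n + 1 ∈ L := ⟨x, u, _, hext, by simp [hrlen]⟩
      have := le_csSup hbdd this
      omega
  refine ⟨w, v, ?_, ?_, ?_⟩
  · rw [Sym2.eq_swap]; exact (hadj v w).mp hvw
  · exact hvw.ne'
  · intro e he hv
    induction e using Sym2.ind with
    | _ a' b' =>
      rcases Sym2.mem_iff.mp hv with rfl | rfl
      · have := hkey b' ((hadj _ _).mpr he)
        subst this
        rw [Sym2.eq_swap]
      · have := hkey a' ((hadj _ _).mpr (Sym2.eq_swap ▸ he))
        subst this
        rfl


section Counting

variable {s : ℕ} {K : Type} [Field K] [Fintype K]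

lemma card_units_aux : Nat.card {x : K // x ≠ 0} = Fintype.card K - 1 := by
  classical
  rw [Nat.card_eq_fintype_card]
  have : Fintype.card {x : K // ¬ x = 0} = Fintype.card K - Fintype.card {x : K // x = 0} :=
    Fintype.card_subtype_compl _
  simpa [Fintype.card_subtype_eq] using this

lemma card_ne_aux (v : Fin s) : Nat.card {i : Fin s // i ≠ v} = s - 1 := by
  classical
  rw [Nat.card_eq_fintype_card]
  have : Fintype.card {i : Fin s // ¬ i = v} = Fintype.card (Fin s) - Fintype.card {i : Fin s // i = v} :=
    Fintype.card_subtype_compl _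
  simpa [Fintype.card_subtype_eq] using this

lemma card_restrict_aux (v : Fin s) :
    Nat.card ({i : Fin s // i ≠ v} → {x : K // x ≠ 0}) = (Fintype.card K - 1) ^ (s - 1) := by
  rw [Nat.card_fun, card_units_aux, card_ne_aux]

lemma card_torus_aux : Nat.card (Torus s K) = (Fintype.card K - 1) ^ s := by
  have e : Torus s K ≃ (Fin s → {x : K // x ≠ 0}) :=
    { toFun := fun P i => ⟨P.1 i, P.2 i⟩
      invFun := fun g => ⟨fun i => (g i).1, fun i => (g i).2⟩
      left_inv := fun P => rfl
      right_inv := fun g => rfl }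
  rw [Nat.card_eq_of_bijective e e.bijective, Nat.card_fun, card_units_aux]
  simp

lemma card_graph_le (v : Fin s) (h : Torus s K → K)
    (hh : ∀ P Q : Torus s K, (∀ i, i ≠ v → P.1 i = Q.1 i) → h P = h Q) :
    Nat.card {P : Torus s K | P.1 v = h P} ≤ (Fintype.card K - 1) ^ (s - 1) := by
  set F : {P : Torus s K // P.1 v = h P} → ({i : Fin s // i ≠ v} → {x : K // x ≠ 0}) :=
    fun P i => ⟨P.1.1 i.1, P.1.2 i.1⟩ with hF
  have hinj : Function.Injective F := by
    intro P Q hPQ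
    have hagree : ∀ i, i ≠ v → P.1.1 i = Q.1.1 i := by
      intro i hi
      have := congrFun hPQ ⟨i, hi⟩
      exact Subtype.ext_iff.mp this
    have hv : P.1.1 v = Q.1.1 v := by
      rw [P.2, Q.2, hh P.1 Q.1 hagree]
    apply Subtype.ext; apply Subtype.ext
    funext i
    by_cases hi : i = v
    · subst hi; exact hv
    · exact hagree i hi
  calc Nat.card {P : Torus s K | P.1 v = h P} ≤
      Nat.card ({i : Fin s // i ≠ v} → {x : K // x ≠ 0}) :=
        Nat.card_le_card_of_injective F hinj
    _ = (Fintype.card K - 1) ^ (s - 1) := card_restrict_aux v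

lemma card_graph_eq (v : Fin s) (h : Torus s K → K)
    (hh : ∀ P Q : Torus s K, (∀ i, i ≠ v → P.1 i = Q.1 i) → h P = h Q)
    (hnz : ∀ P, h P ≠ 0) :
    Nat.card {P : Torus s K | P.1 v = h P} = (Fintype.card K - 1) ^ (s - 1) := by
  classical
  set F : {P : Torus s K // P.1 v = h P} → ({i : Fin s // i ≠ v} → {x : K // x ≠ 0}) :=
    fun P i => ⟨P.1.1 i.1, P.1.2 i.1⟩ with hF
  have hinj : Function.Injective F := by
    intro P Q hPQ
    have hagree : ∀ i, i ≠ v → P.1.1 i = Q.1.1 i := by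
      intro i hi
      have := congrFun hPQ ⟨i, hi⟩
      exact Subtype.ext_iff.mp this
    have hv : P.1.1 v = Q.1.1 v := by
      rw [P.2, Q.2, hh P.1 Q.1 hagree]
    apply Subtype.ext; apply Subtype.ext
    funext i
    by_cases hi : i = v
    · subst hi; exact hv
    · exact hagree i hi
  have hsurj : Function.Surjective F := by
    intro g
    set P₀ : Torus s K := ⟨fun i => if hi : i = v then 1 else (g ⟨i, hi⟩).1, by
      intro i
      by_cases hi : i = v
      · simp [hi]
      · simpa [hi] using (g ⟨i, hi⟩).2⟩ with hP₀
    set a : K := h P₀ with ha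
    set P : Torus s K := ⟨fun i => if hi : i = v then a else (g ⟨i, hi⟩).1, by
      intro i
      by_cases hi : i = v
      · simpa [hi] using hnz P₀
      · simpa [hi] using (g ⟨i, hi⟩).2⟩ with hP
    have hPmem : P.1 v = h P := by
      have : h P = h P₀ := by
        apply hh
        intro i hi
        simp [hP, hP₀, hi]
      rw [this]
      simp [hP, ha]
    refine ⟨⟨P, hPmem⟩, ?_⟩
    funext i
    apply Subtype.ext
    simp [hF, hP, i.2]
  exact (Nat.card_eq_of_bijective F ⟨hinj, hsurj⟩).trans (card_restrict_aux v)

end Counting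

end Aux

section EvalAux
open MvPolynomial
variable {s : ℕ} {K : Type} [Field K]

lemma aeval_edgeMonSym2 (x : Fin s → K) (i j : Fin s) :
    aeval x (edgeMonSym2 s K s(i, j)) = x i * x j := by
  simp [edgeMonSym2]

lemma aeval_edgeMon_agree (e : Sym2 (Fin s)) (x y : Fin s → K)
    (hxy : ∀ i ∈ e, x i = y i) :
    aeval x (edgeMonSym2 s K e) = aeval y (edgeMonSym2 s K e) := by
  induction e using Sym2.ind with
  | _ i j =>
    rw [aeval_edgeMonSym2, aeval_edgeMonSym2,
      hxy i (Sym2.mem_mk_left i j), hxy j (Sym2.mem_mk_right i j)]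

end EvalAux

/-- for `q ≥ 3` and a connected tree `G` on `{1,…,s}` with `s ≥ 3`, the
minimum distance of the edge code of `G` is `(q-1)^s - (q-1)^{s-1} = (q-2)(q-1)^{s-1}`. -/
theorem minDist_edgeCode_tree
    (q s : ℕ) (hq : 3 ≤ q) (hs : 3 ≤ s)
    (K : Type) [Field K] [Fintype K] (hK : Fintype.card K = q)
    (G : SimpleGraph (Fin s)) (hG : G.IsTree) :
    minDist (graphCode s K G) = (q - 1) ^ s - (q - 1) ^ (s - 1) ∧
    (q - 1) ^ s - (q - 1) ^ (s - 1) = (q - 2) * (q - 1) ^ (s - 1) := by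
  classical
  have hq1 : 1 ≤ q - 1 := by omega
  have hcardK : Fintype.card K - 1 = q - 1 := by omega
  -- arithmetic identity
  have hmulsub : ∀ x : ℕ, (q - 1) * x - x = (q - 2) * x := by
    intro x
    calc (q - 1) * x - x = (q - 1) * x - 1 * x := by rw [one_mul]
      _ = (q - 1 - 1) * x := (Nat.sub_mul _ _ _).symm
      _ = (q - 2) * x := rfl
  have hpow : (q - 1) ^ s = (q - 1) * (q - 1) ^ (s - 1) := by
    conv_lhs => rw [show s = s - 1 + 1 by omega]
    rw [pow_succ, mul_comm]
  have harith : (q - 1) ^ s - (q - 1) ^ (s - 1) = (q - 2) * (q - 1) ^ (s - 1) := by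
    rw [hpow, hmulsub]
  refine ⟨?_, harith⟩
  -- weight + zero count = total
  have hwt : ∀ c : Torus s K → K,
      wt c + ({P : Torus s K | c P = 0}).ncard = (q - 1) ^ s := by
    intro c
    have hcompl : {P : Torus s K | c P ≠ 0}ᶜ = {P : Torus s K | c P = 0} := by
      ext P; simp
    have := Set.ncard_add_ncard_compl {P : Torus s K | c P ≠ 0}
    rw [hcompl] at this
    rw [wt, this, card_torus_aux, hcardK]
  -- evaluation is `aeval`
  have heval : ∀ (f : MvPolynomial (Fin s) K) (P : Torus s K),
      evalTorus s K f P = aeval P.1 f := fun _ _ => rfl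
  -- lower bound for the number of zeros of a nonzero codeword
  have hlow : ∀ cw ∈ graphCode s K G, cw ≠ 0 →
      ({P : Torus s K | cw P = 0}).ncard ≤ (q - 1) ^ (s - 1) := by
    intro cw hcw hcwne
    obtain ⟨f, hf, rfl⟩ := hcw
    haveI : Fintype ↥G.edgeSet := Fintype.ofFinite _
    rw [Set.image_eq_range] at hf
    obtain ⟨w, hw⟩ := (Submodule.mem_span_range_iff_exists_fun K).mp hf
    have hpt : ∀ P : Torus s K,
        evalTorus s K f P = ∑ e : G.edgeSet, w e * aeval P.1 (edgeMonSym2 s K e.1) := by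
      intro P
      rw [heval, ← hw, map_sum]
      refine Finset.sum_congr rfl fun e _ => ?_
      rw [smul_eq_C_mul, map_mul, aeval_C]
      rfl
    set D : Set (Sym2 (Fin s)) := {e : Sym2 (Fin s) | ∃ he : e ∈ G.edgeSet, w ⟨e, he⟩ ≠ 0}
      with hD
    have hDsub : D ⊆ G.edgeSet := by rintro e ⟨he, -⟩; exact he
    have hDne : D.Nonempty := by
      by_contra hcon
      rw [Set.not_nonempty_iff_eq_empty] at hcon
      have hwz : ∀ e : G.edgeSet, w e = 0 := by
        intro e
        by_contra hwe
        have : e.1 ∈ D := ⟨e.2, hwe⟩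
        rw [hcon] at this
        exact this
      have : f = 0 := by
        rw [← hw]
        exact Finset.sum_eq_zero fun e _ => by rw [hwz e, zero_smul]
      apply hcwne
      rw [this, map_zero]
    obtain ⟨u₀, v₀, h₀D, hu0v0, hleaf⟩ :=
      exists_leaf_edge hG.IsAcyclic hDsub hDne
    set e₀ : ↥G.edgeSet := ⟨s(u₀, v₀), hDsub h₀D⟩ with he₀
    set c₀ : K := w e₀ with hc₀def
    have hc₀ : c₀ ≠ 0 := by obtain ⟨he, hne0⟩ := h₀D; exact hne0
    set R : Torus s K → K :=
      fun P => ∑ e ∈ Finset.univ.erase e₀, w e * aeval P.1 (edgeMonSym2 s K e.1) with hR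
    have hsplit : ∀ P : Torus s K,
        evalTorus s K f P = c₀ * (P.1 u₀ * P.1 v₀) + R P := by
      intro P
      rw [hpt, ← Finset.add_sum_erase _ _ (Finset.mem_univ e₀)]
      congr 1
      show w e₀ * aeval P.1 (edgeMonSym2 s K s(u₀, v₀)) = _
      rw [aeval_edgeMonSym2]
    set h : Torus s K → K :=
      fun P => P.1 v₀ - (evalTorus s K f P) / (c₀ * P.1 u₀) with hh_def
    have hform : ∀ P : Torus s K, h P = - (R P / (c₀ * P.1 u₀)) := by
      intro P
      have hcP : c₀ * P.1 u₀ ≠ 0 := mul_ne_zero hc₀ (P.2 u₀)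
      show P.1 v₀ - (evalTorus s K f P) / (c₀ * P.1 u₀) = _
      rw [hsplit, ← mul_assoc, add_div, mul_div_cancel_left₀ _ hcP]
      ring
    have hh : ∀ P Q : Torus s K, (∀ i, i ≠ v₀ → P.1 i = Q.1 i) → h P = h Q := by
      intro P Q hagree
      have hu : P.1 u₀ = Q.1 u₀ := hagree u₀ hu0v0
      have hRPQ : R P = R Q := by
        refine Finset.sum_congr rfl fun e he => ?_
        by_cases hwe : w e = 0
        · rw [hwe, zero_mul, zero_mul]
        · have heD : e.1 ∈ D := ⟨e.2, hwe⟩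
          have hne : e.1 ≠ s(u₀, v₀) := by
            intro hco
            exact (Finset.mem_erase.mp he).1 (Subtype.ext hco)
          have hv0 : v₀ ∉ e.1 := fun hmem => hne (hleaf e.1 heD hmem)
          rw [aeval_edgeMon_agree e.1 P.1 Q.1
            (fun i hi => hagree i (fun hiv => hv0 (hiv ▸ hi)))]
      rw [hform, hform, hRPQ, hu]
    have hsub : {P : Torus s K | evalTorus s K f P = 0} ⊆ {P : Torus s K | P.1 v₀ = h P} := by
      intro P hP
      have hP' : evalTorus s K f P = 0 := hP
      show P.1 v₀ = h P
      rw [hh_def]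
      simp [hP']
    calc ({P : Torus s K | evalTorus s K f P = 0}).ncard
        ≤ ({P : Torus s K | P.1 v₀ = h P}).ncard :=
          Set.ncard_le_ncard hsub (Set.toFinite _)
      _ = Nat.card {P : Torus s K | P.1 v₀ = h P} := (Nat.card_coe_set_eq _).symm
      _ ≤ (Fintype.card K - 1) ^ (s - 1) := card_graph_le v₀ h hh
      _ = (q - 1) ^ (s - 1) := by rw [hcardK]
  -- construct a codeword of minimal weight
  obtain ⟨a, b, c, hab, hac, hbc⟩ :=
    exists_two_neighbors hG.isConnected (by simpa using hs)
  set f : MvPolynomial (Fin s) K := edgeMonSym2 s K s(a, b) - edgeMonSym2 s K s(a, c) with hf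
  have hfspan : f ∈ Submodule.span K (edgeMonSym2 s K '' G.edgeSet) :=
    sub_mem (Submodule.subset_span ⟨s(a, b), G.mem_edgeSet.mpr hab, rfl⟩)
      (Submodule.subset_span ⟨s(a, c), G.mem_edgeSet.mpr hac, rfl⟩)
  set cw : Torus s K → K := evalTorus s K f with hcw
  have hcwC : cw ∈ graphCode s K G := ⟨f, hfspan, rfl⟩
  have hcwP : ∀ P : Torus s K, cw P = P.1 a * (P.1 b - P.1 c) := by
    intro P
    rw [hcw, heval, hf, map_sub, aeval_edgeMonSym2, aeval_edgeMonSym2]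
    ring
  obtain ⟨u, hu0, hu1⟩ : ∃ u : K, u ≠ 0 ∧ u ≠ 1 := by
    by_contra hcon
    push_neg at hcon
    have hsubK : (Finset.univ : Finset K) ⊆ {0, 1} := by
      intro z _
      rcases eq_or_ne z 0 with h | h
      · simp [h]
      · simp [hcon z h]
    have h2 := Finset.card_le_card hsubK
    simp only [Finset.card_univ] at h2
    have : Fintype.card K ≤ 2 :=
      le_trans h2 ((Finset.card_insert_le _ _).trans (by simp))
    omega
  set P₀ : Torus s K := ⟨fun i => if i = c then u else 1, by
    intro i
    by_cases h : i = c
    · simpa [h] using hu0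
    · simp [h]⟩ with hP₀
  have hcwne : cw ≠ 0 := by
    intro h0
    have h1 := congrFun h0 P₀
    rw [hcwP] at h1
    have : (1 : K) * (1 - u) = 0 := by
      simpa [hP₀, hac.ne, hbc] using h1
    rw [one_mul, sub_eq_zero] at this
    exact hu1 this.symm
  have hzset : {P : Torus s K | cw P = 0} = {P : Torus s K | P.1 b = (fun P : Torus s K => P.1 c) P} := by
    ext P
    simp only [Set.mem_setOf_eq, hcwP]
    rw [mul_eq_zero, sub_eq_zero]
    constructor
    · rintro (h | h)
      · exact absurd h (P.2 a)
      · exact h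
    · exact fun h => Or.inr h
  have hzcard : ({P : Torus s K | cw P = 0}).ncard = (q - 1) ^ (s - 1) := by
    rw [hzset, ← Nat.card_coe_set_eq,
      card_graph_eq b (fun P : Torus s K => P.1 c)
        (fun P Q hagree => hagree c (Ne.symm hbc)) (fun P => P.2 c), hcardK]
  have hwtcw : wt cw = (q - 1) ^ s - (q - 1) ^ (s - 1) := by
    have := hwt cw
    rw [hzcard] at this
    omega
  -- conclude
  have hmem : (q - 1) ^ s - (q - 1) ^ (s - 1) ∈
      {w : ℕ | ∃ c ∈ graphCode s K G, c ≠ 0 ∧ wt c = w} :=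
    ⟨cw, hcwC, hcwne, hwtcw⟩
  have hlb : ∀ m ∈ {w : ℕ | ∃ c ∈ graphCode s K G, c ≠ 0 ∧ wt c = w},
      (q - 1) ^ s - (q - 1) ^ (s - 1) ≤ m := by
    rintro m ⟨c', hc'C, hc'ne, rfl⟩
    have h1 := hwt c'
    have h2 := hlow c' hc'C hc'ne
    omega
  exact le_antisymm (Nat.sInf_le hmem) (le_csInf ⟨_, hmem⟩ hlb)
end

section
/- Let q ≥ 3, let s = 5, and let C_5 be the cycle graph on vertices {1,2,3,4,5} with edges {1,2}, {2,3}, {3,4}, {4,5}, {5,1}. Then the minimum distance of the edge code of C_5 is δ(C_{C_5}) = (q−1)^5 − (q−1)^4 = (q−2)(q−1)^4. -/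
open MvPolynomial

set_option linter.unusedSectionVars false

section Toolbox
variable {K : Type} [Field K] [Fintype K] [DecidableEq K]

lemma natCard_le_one_of_subsingleton (X : Type) [Subsingleton X] : Nat.card X ≤ 1 := by
  rcases isEmpty_or_nonempty X with h | h
  · simp [Nat.card_of_isEmpty]
  · have : Unique X := uniqueOfSubsingleton (Classical.arbitrary X)
    rw [Nat.card_unique]

lemma natCard_subtype_le {A : Type} [Fintype A] (p : A → Prop) :
    Nat.card {a : A // p a} ≤ Nat.card A := by
  classical
  rw [Nat.card_eq_fintype_card, Nat.card_eq_fintype_card]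
  exact Fintype.card_subtype_le p

lemma natCard_fiber {A B : Type} [Fintype A] [Fintype B] (p : A × B → Prop) :
    Nat.card {x : A × B // p x} = ∑ b : B, Nat.card {a : A // p (a, b)} := by
  classical
  have e : {x : A × B // p x} ≃ Σ b : B, {a : A // p (a, b)} :=
    ((Equiv.prodComm A B).symm.subtypeEquiv (fun y => Iff.rfl)).symm.trans
      (Equiv.subtypeProdEquivSigmaSubtype (fun b a => p (a, b)))
  rw [Nat.card_congr e, Nat.card_eq_fintype_card, Fintype.card_sigma]
  exact Finset.sum_congr rfl fun b _ => (Nat.card_eq_fintype_card).symm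

lemma natCard_prod_pred_left {A B : Type} [Fintype A] [Fintype B] (p : A → Prop) :
    Nat.card {x : A × B // p x.1} = Nat.card {a : A // p a} * Nat.card B := by
  classical
  have e : {x : A × B // p x.1} ≃ {a : A // p a} × B :=
    Equiv.prodSubtypeFstEquivSubtypeProd
  rw [Nat.card_congr e, Nat.card_prod]

lemma natCard_linear_le_one (γ δ : K) (h : γ ≠ 0 ∨ δ ≠ 0) :
    Nat.card {x : Kˣ // γ * (x : K) + δ = 0} ≤ 1 := by
  by_cases hγ : γ = 0
  · have hδ : δ ≠ 0 := by tauto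
    have : IsEmpty {x : Kˣ // γ * (x : K) + δ = 0} := by
      constructor; rintro ⟨x, hx⟩
      rw [hγ, zero_mul, zero_add] at hx
      exact hδ hx
    simp [Nat.card_of_isEmpty]
  · have : Subsingleton {x : Kˣ // γ * (x : K) + δ = 0} := by
      constructor
      rintro ⟨x, hx⟩ ⟨y, hy⟩
      have hxy : γ * (x : K) = γ * y :=
        (eq_neg_of_add_eq_zero_left hx).trans (eq_neg_of_add_eq_zero_left hy).symm
      exact Subtype.ext (Units.ext (mul_left_cancel₀ hγ hxy))
    exact natCard_le_one_of_subsingleton _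

lemma natCard_linear_eq_zero (γ δ : K) (hγ : γ ≠ 0) (hδ : δ = 0) :
    Nat.card {x : Kˣ // γ * (x : K) + δ = 0} = 0 := by
  have : IsEmpty {x : Kˣ // γ * (x : K) + δ = 0} := by
    constructor; rintro ⟨x, hx⟩
    rw [hδ, add_zero] at hx
    exact x.ne_zero (by
      have := mul_eq_zero.mp hx
      tauto)
  simp [Nat.card_of_isEmpty]

/-- number of solutions of `a x + e y = 0` in `Kˣ × Kˣ`, `a, e ≠ 0`. -/
lemma natCard_linear_two (a e : K) (ha : a ≠ 0) (he : e ≠ 0) :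
    Nat.card {x : Kˣ × Kˣ // a * (x.1 : K) + e * (x.2 : K) = 0} = Nat.card Kˣ := by
  have key : ∀ x : Kˣ, -(a * (x : K)) / e ≠ 0 := fun x => by
    apply div_ne_zero _ he
    simpa using mul_ne_zero ha x.ne_zero
  refine Nat.card_congr (Equiv.symm ?_)
  refine ⟨fun x => ⟨(x, Units.mk0 (-(a * (x : K)) / e) (key x)), by
      show a * (x : K) + e * (-(a * (x : K)) / e) = 0
      field_simp
      ring⟩,
    fun p => p.1.1, fun x => rfl, ?_⟩
  rintro ⟨⟨x, y⟩, hxy⟩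
  refine Subtype.ext (Prod.ext rfl (Units.ext ?_))
  have : (y : K) = -(a * (x : K)) / e := by
    rw [eq_div_iff he]
    have : a * (x : K) + e * (y : K) = 0 := hxy
    linear_combination this
  simp [this]

end Toolbox

section ZCount
variable {K : Type} [Field K] [Fintype K] [DecidableEq K]

/-- coordinates: `x = (t1, ((t2, t5), (t3, t4)))`. -/
def zf (a b c d e : K) (x : Kˣ × ((Kˣ × Kˣ) × (Kˣ × Kˣ))) : K :=
  a * ((x.1 : K) * (x.2.1.1 : K)) + b * ((x.2.1.1 : K) * (x.2.2.1 : K))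
    + c * ((x.2.2.1 : K) * (x.2.2.2 : K)) + d * ((x.2.2.2 : K) * (x.2.1.2 : K))
    + e * ((x.2.1.2 : K) * (x.1 : K))

noncomputable def Zc (a b c d e : K) : ℕ :=
  Nat.card {x : Kˣ × ((Kˣ × Kˣ) × (Kˣ × Kˣ)) // zf a b c d e x = 0}

lemma Zc_rot (a b c d e : K) : Zc a b c d e = Zc b c d e a := by
  apply Nat.card_congr
  refine Equiv.subtypeEquiv
    ⟨fun x => (x.2.1.1, ((x.2.2.1, x.1), (x.2.2.2, x.2.1.2))),
     fun y => (y.2.1.2, ((y.1, y.2.2.2), (y.2.1.1, y.2.2.1))),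
     fun x => rfl, fun y => rfl⟩ ?_
  intro x
  have : zf b c d e a ((x.2.1.1, ((x.2.2.1, x.1), (x.2.2.2, x.2.1.2)))) = zf a b c d e x := by
    simp only [zf]; ring
  rw [Equiv.coe_fn_mk, this]

lemma Zc_eq_sum (a b c d e : K) :
    Zc a b c d e = ∑ r : (Kˣ × Kˣ) × (Kˣ × Kˣ),
      Nat.card {t : Kˣ // (a * (r.1.1 : K) + e * (r.1.2 : K)) * (t : K)
        + (b * ((r.1.1 : K) * (r.2.1 : K)) + c * ((r.2.1 : K) * (r.2.2 : K))
            + d * ((r.2.2 : K) * (r.1.2 : K))) = 0} := by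
  rw [Zc, natCard_fiber]
  refine Finset.sum_congr rfl fun r _ => ?_
  apply Nat.card_congr (Equiv.subtypeEquivRight ?_)
  intro t
  have : zf a b c d e (t, r) = (a * (r.1.1 : K) + e * (r.1.2 : K)) * (t : K)
        + (b * ((r.1.1 : K) * (r.2.1 : K)) + c * ((r.2.1 : K) * (r.2.2 : K))
            + d * ((r.2.2 : K) * (r.1.2 : K))) := by
    simp only [zf]; ring
  rw [this]

/-- inner count: number of `(t3, t4)` with `b t2 t3 + c t3 t4 + d t4 t5 = 0` is at most `q - 1`,
provided `(b,c,d) ≠ 0` and `t2, t5 ≠ 0`. -/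
lemma inner_le (b c d t2 t5 : K) (h : ¬(b = 0 ∧ c = 0 ∧ d = 0)) (ht2 : t2 ≠ 0) (ht5 : t5 ≠ 0) :
    Nat.card {v : Kˣ × Kˣ // b * (t2 * (v.1 : K)) + c * ((v.1 : K) * (v.2 : K))
      + d * ((v.2 : K) * t5) = 0} ≤ Nat.card Kˣ := by
  classical
  rw [natCard_fiber]
  have hform : ∀ (t4 t3 : Kˣ),
      (b * (t2 * (t3 : K)) + c * ((t3 : K) * (t4 : K)) + d * ((t4 : K) * t5) = 0)
        ↔ ((b * t2 + c * (t4 : K)) * (t3 : K) + d * ((t4 : K) * t5) = 0) := by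
    intro t4 t3
    constructor <;> intro hh <;> linear_combination hh
  by_cases hd : d = 0
  · -- here b ≠ 0 or c ≠ 0
    have hbc : b ≠ 0 ∨ c ≠ 0 := by tauto
    calc ∑ t4 : Kˣ, Nat.card {t3 : Kˣ // b * (t2 * (t3 : K)) + c * ((t3 : K) * (t4 : K))
            + d * ((t4 : K) * t5) = 0}
        ≤ ∑ t4 : Kˣ, (if c * (t4 : K) + b * t2 = 0 then Nat.card Kˣ else 0) := by
          refine Finset.sum_le_sum fun t4 _ => ?_
          by_cases hγ : c * (t4 : K) + b * t2 = 0
          · rw [if_pos hγ]; exact natCard_subtype_le _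
          · rw [if_neg hγ]
            rw [show (0 : ℕ) = Nat.card {t3 : Kˣ // (b * t2 + c * (t4 : K)) * (t3 : K)
                + d * ((t4 : K) * t5) = 0} from ?_]
            · apply Nat.card_le_card_of_injective (fun x => ⟨x.1, (hform t4 x.1).mp x.2⟩)
              intro u v huv
              cases u; cases v
              simpa [Subtype.mk.injEq] using huv
            · rw [eq_comm]
              apply natCard_linear_eq_zero
              · intro hh; exact hγ (by linear_combination hh)
              · simp [hd]
      _ ≤ Nat.card Kˣ := by
          rw [← Finset.sum_filter]
          rw [Finset.sum_const, smul_eq_mul]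
          have : (Finset.univ.filter (fun t4 : Kˣ => c * (t4 : K) + b * t2 = 0)).card
              = Nat.card {t4 : Kˣ // c * (t4 : K) + b * t2 = 0} := by
            rw [Nat.card_eq_fintype_card, Fintype.card_subtype]
          rw [this]
          have hle : Nat.card {t4 : Kˣ // c * (t4 : K) + b * t2 = 0} ≤ 1 := by
            apply natCard_linear_le_one
            rcases hbc with hb | hc
            · exact Or.inr (mul_ne_zero hb ht2)
            · exact Or.inl hc
          calc Nat.card {t4 : Kˣ // c * (t4 : K) + b * t2 = 0} * Nat.card Kˣ
              ≤ 1 * Nat.card Kˣ := Nat.mul_le_mul_right _ hle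
            _ = Nat.card Kˣ := one_mul _
  · -- d ≠ 0 : each fiber has at most one solution
    calc ∑ t4 : Kˣ, Nat.card {t3 : Kˣ // b * (t2 * (t3 : K)) + c * ((t3 : K) * (t4 : K))
            + d * ((t4 : K) * t5) = 0}
        ≤ ∑ _t4 : Kˣ, 1 := by
          refine Finset.sum_le_sum fun t4 _ => ?_
          have : Nat.card {t3 : Kˣ // b * (t2 * (t3 : K)) + c * ((t3 : K) * (t4 : K))
              + d * ((t4 : K) * t5) = 0} = Nat.card {t3 : Kˣ // (b * t2 + c * (t4 : K)) * (t3 : K)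
              + d * ((t4 : K) * t5) = 0} := Nat.card_congr (Equiv.subtypeEquivRight (hform t4))
          rw [this]
          exact natCard_linear_le_one _ _ (Or.inr (mul_ne_zero hd
            (mul_ne_zero t4.ne_zero ht5)))
      _ = Nat.card Kˣ := by
          rw [Finset.sum_const, smul_eq_mul, mul_one, Finset.card_univ,
            Nat.card_eq_fintype_card]

end ZCount

section ZMain
variable {K : Type} [Field K] [Fintype K] [DecidableEq K]

lemma card_pairs : Fintype.card (Kˣ × Kˣ) = Nat.card Kˣ ^ 2 := by
  rw [Fintype.card_prod, Nat.card_eq_fintype_card, sq]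

lemma Zc_le_of_first (a b c d e : K) (ha : a ≠ 0) :
    Zc a b c d e ≤ Nat.card Kˣ ^ 4 := by
  classical
  rw [Zc_eq_sum]
  set n := Nat.card Kˣ with hn
  by_cases he : e = 0
  · -- α = a t2 ≠ 0 always
    calc (∑ r : (Kˣ × Kˣ) × (Kˣ × Kˣ),
          Nat.card {t : Kˣ // (a * (r.1.1 : K) + e * (r.1.2 : K)) * (t : K)
            + (b * ((r.1.1 : K) * (r.2.1 : K)) + c * ((r.2.1 : K) * (r.2.2 : K))
                + d * ((r.2.2 : K) * (r.1.2 : K))) = 0})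
        ≤ ∑ _r : (Kˣ × Kˣ) × (Kˣ × Kˣ), 1 := by
          refine Finset.sum_le_sum fun r _ => ?_
          apply natCard_linear_le_one
          left
          rw [he, zero_mul, add_zero]
          exact mul_ne_zero ha r.1.1.ne_zero
      _ = n ^ 4 := by
          rw [Finset.sum_const, smul_eq_mul, mul_one, Finset.card_univ, Fintype.card_prod,
            card_pairs, ← hn]
          ring
  · rw [Fintype.sum_prod_type]
    by_cases hbcd : b = 0 ∧ c = 0 ∧ d = 0
    · obtain ⟨rfl, rfl, rfl⟩ := hbcd
      calc (∑ u : Kˣ × Kˣ, ∑ v : Kˣ × Kˣ,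
            Nat.card {t : Kˣ // (a * (u.1 : K) + e * (u.2 : K)) * (t : K)
              + ((0:K) * ((u.1 : K) * (v.1 : K)) + (0:K) * ((v.1 : K) * (v.2 : K))
                  + (0:K) * ((v.2 : K) * (u.2 : K))) = 0})
          ≤ ∑ u : Kˣ × Kˣ, ∑ _v : Kˣ × Kˣ,
              (if a * (u.1 : K) + e * (u.2 : K) = 0 then n else 0) := by
            refine Finset.sum_le_sum fun u _ => Finset.sum_le_sum fun v _ => ?_
            by_cases hα : a * (u.1 : K) + e * (u.2 : K) = 0
            · rw [if_pos hα]; exact natCard_subtype_le _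
            · rw [if_neg hα]
              have : Nat.card {t : Kˣ // (a * (u.1 : K) + e * (u.2 : K)) * (t : K)
                + ((0:K) * ((u.1 : K) * (v.1 : K)) + (0:K) * ((v.1 : K) * (v.2 : K))
                    + (0:K) * ((v.2 : K) * (u.2 : K))) = 0}
                  = Nat.card {t : Kˣ // (a * (u.1 : K) + e * (u.2 : K)) * (t : K) + 0 = 0} := by
                apply Nat.card_congr (Equiv.subtypeEquivRight ?_)
                intro t; constructor <;> intro hh <;> linear_combination hh
              rw [this, natCard_linear_eq_zero _ _ hα rfl]
        _ = n ^ 4 := by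
            have inner : ∀ u : Kˣ × Kˣ, (∑ _v : Kˣ × Kˣ,
                (if a * (u.1 : K) + e * (u.2 : K) = 0 then n else 0))
                = (if a * (u.1 : K) + e * (u.2 : K) = 0 then n else 0) * n ^ 2 := by
              intro u
              rw [Finset.sum_const, smul_eq_mul, Finset.card_univ, card_pairs, mul_comm]
            rw [Finset.sum_congr rfl fun u _ => inner u]
            rw [← Finset.sum_mul, ← Finset.sum_filter, Finset.sum_const, smul_eq_mul]
            have : (Finset.univ.filter (fun u : Kˣ × Kˣ => a * (u.1 : K) + e * (u.2 : K) = 0)).card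
                = Nat.card {u : Kˣ × Kˣ // a * (u.1 : K) + e * (u.2 : K) = 0} := by
              rw [Nat.card_eq_fintype_card, Fintype.card_subtype]
            rw [this, natCard_linear_two a e ha he, ← hn]
            ring
    · -- (b,c,d) ≠ 0
      calc (∑ u : Kˣ × Kˣ, ∑ v : Kˣ × Kˣ,
            Nat.card {t : Kˣ // (a * (u.1 : K) + e * (u.2 : K)) * (t : K)
              + (b * ((u.1 : K) * (v.1 : K)) + c * ((v.1 : K) * (v.2 : K))
                  + d * ((v.2 : K) * (u.2 : K))) = 0})
          ≤ ∑ _u : Kˣ × Kˣ, n ^ 2 := by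
            refine Finset.sum_le_sum fun u _ => ?_
            by_cases hα : a * (u.1 : K) + e * (u.2 : K) = 0
            · -- fiber over v: card = (if β v = 0 then n else 0)
              calc (∑ v : Kˣ × Kˣ,
                    Nat.card {t : Kˣ // (a * (u.1 : K) + e * (u.2 : K)) * (t : K)
                      + (b * ((u.1 : K) * (v.1 : K)) + c * ((v.1 : K) * (v.2 : K))
                          + d * ((v.2 : K) * (u.2 : K))) = 0})
                  ≤ ∑ v : Kˣ × Kˣ, (if b * ((u.1 : K) * (v.1 : K)) + c * ((v.1 : K) * (v.2 : K))
                      + d * ((v.2 : K) * (u.2 : K)) = 0 then n else 0) := by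
                    refine Finset.sum_le_sum fun v _ => ?_
                    by_cases hβ : b * ((u.1 : K) * (v.1 : K)) + c * ((v.1 : K) * (v.2 : K))
                      + d * ((v.2 : K) * (u.2 : K)) = 0
                    · rw [if_pos hβ]; exact natCard_subtype_le _
                    · rw [if_neg hβ]
                      have : IsEmpty {t : Kˣ // (a * (u.1 : K) + e * (u.2 : K)) * (t : K)
                        + (b * ((u.1 : K) * (v.1 : K)) + c * ((v.1 : K) * (v.2 : K))
                            + d * ((v.2 : K) * (u.2 : K))) = 0} := by
                        constructor; rintro ⟨t, ht⟩
                        rw [hα, zero_mul, zero_add] at ht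
                        exact hβ ht
                      simp [Nat.card_of_isEmpty]
                _ ≤ n * n := by
                    rw [← Finset.sum_filter, Finset.sum_const, smul_eq_mul]
                    have : (Finset.univ.filter (fun v : Kˣ × Kˣ =>
                        b * ((u.1 : K) * (v.1 : K)) + c * ((v.1 : K) * (v.2 : K))
                          + d * ((v.2 : K) * (u.2 : K)) = 0)).card
                        = Nat.card {v : Kˣ × Kˣ // b * ((u.1 : K) * (v.1 : K))
                            + c * ((v.1 : K) * (v.2 : K)) + d * ((v.2 : K) * (u.2 : K)) = 0} := by
                      rw [Nat.card_eq_fintype_card, Fintype.card_subtype]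
                    rw [this]
                    exact Nat.mul_le_mul_right _ (inner_le b c d _ _ hbcd u.1.ne_zero u.2.ne_zero)
                _ = n ^ 2 := (sq n).symm
            · calc (∑ v : Kˣ × Kˣ,
                    Nat.card {t : Kˣ // (a * (u.1 : K) + e * (u.2 : K)) * (t : K)
                      + (b * ((u.1 : K) * (v.1 : K)) + c * ((v.1 : K) * (v.2 : K))
                          + d * ((v.2 : K) * (u.2 : K))) = 0})
                  ≤ ∑ _v : Kˣ × Kˣ, 1 :=
                    Finset.sum_le_sum fun v _ => natCard_linear_le_one _ _ (Or.inl hα)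
                _ = n ^ 2 := by
                    rw [Finset.sum_const, smul_eq_mul, mul_one, Finset.card_univ, card_pairs]
        _ = n ^ 4 := by
            rw [Finset.sum_const, smul_eq_mul, Finset.card_univ, card_pairs]
            ring

lemma Zc_le (a b c d e : K) (h : ¬(a = 0 ∧ b = 0 ∧ c = 0 ∧ d = 0 ∧ e = 0)) :
    Zc a b c d e ≤ Nat.card Kˣ ^ 4 := by
  by_cases ha : a ≠ 0
  · exact Zc_le_of_first a b c d e ha
  by_cases hb : b ≠ 0
  · rw [Zc_rot]; exact Zc_le_of_first _ _ _ _ _ hb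
  by_cases hc : c ≠ 0
  · rw [Zc_rot, Zc_rot]; exact Zc_le_of_first _ _ _ _ _ hc
  by_cases hd : d ≠ 0
  · rw [Zc_rot, Zc_rot, Zc_rot]; exact Zc_le_of_first _ _ _ _ _ hd
  by_cases hee : e ≠ 0
  · rw [Zc_rot, Zc_rot, Zc_rot, Zc_rot]; exact Zc_le_of_first _ _ _ _ _ hee
  exact absurd ⟨not_not.mp ha, not_not.mp hb, not_not.mp hc, not_not.mp hd, not_not.mp hee⟩ h

lemma Zc_witness : Zc (1 : K) (-1) 0 0 0 = Nat.card Kˣ ^ 4 := by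
  have step1 : Zc (1 : K) (-1) 0 0 0
      = Nat.card {x : Kˣ × ((Kˣ × Kˣ) × (Kˣ × Kˣ)) // x.1 = x.2.2.1} := by
    apply Nat.card_congr (Equiv.subtypeEquivRight ?_)
    intro x
    constructor
    · intro h
      have h2 : (x.2.1.1 : K) * ((x.1 : K) - (x.2.2.1 : K)) = 0 := by
        simp only [zf] at h; linear_combination h
      rcases mul_eq_zero.mp h2 with h3 | h3
      · exact absurd h3 x.2.1.1.ne_zero
      · exact Units.ext (sub_eq_zero.mp h3)
    · intro h
      have h2 : (x.1 : K) = (x.2.2.1 : K) := congrArg Units.val h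
      simp only [zf]
      linear_combination (x.2.1.1 : K) * h2
  rw [step1]
  have e : {x : Kˣ × ((Kˣ × Kˣ) × (Kˣ × Kˣ)) // x.1 = x.2.2.1}
      ≃ Kˣ × ((Kˣ × Kˣ) × Kˣ) := by
    refine ⟨fun x => (x.1.1, (x.1.2.1, x.1.2.2.2)),
      fun y => ⟨(y.1, (y.2.1, (y.1, y.2.2))), rfl⟩, ?_, fun y => rfl⟩
    rintro ⟨⟨t1, ⟨u, ⟨t3, t4⟩⟩⟩, h⟩
    cases h
    rfl
  rw [Nat.card_congr e, Nat.card_prod, Nat.card_prod, Nat.card_prod]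
  ring

end ZMain

section Glue
variable {K : Type} [Field K] [Fintype K] [DecidableEq K]

def cfun (a b c d e : K) : Torus 5 K → K := fun P =>
  a * (P.1 0 * P.1 1) + b * (P.1 1 * P.1 2) + c * (P.1 2 * P.1 3) + d * (P.1 3 * P.1 4)
    + e * (P.1 4 * P.1 0)

def torusEquiv : Torus 5 K ≃ Kˣ × ((Kˣ × Kˣ) × (Kˣ × Kˣ)) where
  toFun P := (Units.mk0 (P.1 0) (P.2 0),
    ((Units.mk0 (P.1 1) (P.2 1), Units.mk0 (P.1 4) (P.2 4)),
     (Units.mk0 (P.1 2) (P.2 2), Units.mk0 (P.1 3) (P.2 3))))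
  invFun x := ⟨![(x.1 : K), (x.2.1.1 : K), (x.2.2.1 : K), (x.2.2.2 : K), (x.2.1.2 : K)], by
    intro i; fin_cases i <;> simp⟩
  left_inv P := by
    apply Subtype.ext; funext i; fin_cases i <;> simp
  right_inv x := by
    refine Prod.ext (Units.ext ?_) (Prod.ext (Prod.ext (Units.ext ?_) (Units.ext ?_))
      (Prod.ext (Units.ext ?_) (Units.ext ?_))) <;> simp

lemma card_zero_set (a b c d e : K) :
    Nat.card {P : Torus 5 K // cfun a b c d e P = 0} = Zc a b c d e := by
  apply Nat.card_congr (torusEquiv.subtypeEquiv ?_)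
  intro P
  have : zf a b c d e (torusEquiv P) = cfun a b c d e P := by
    simp only [zf, cfun, torusEquiv, Equiv.coe_fn_mk, Units.val_mk0]
  rw [this]

lemma cardTorus : Nat.card (Torus 5 K) = Nat.card Kˣ ^ 5 := by
  rw [Nat.card_congr (torusEquiv (K := K))]
  simp only [Nat.card_prod]
  ring

lemma wt_cfun (a b c d e : K) :
    wt (cfun a b c d e) = Nat.card Kˣ ^ 5 - Zc a b c d e := by
  have h1 : {P : Torus 5 K | cfun a b c d e P ≠ 0}.ncard
      + {P : Torus 5 K | cfun a b c d e P ≠ 0}ᶜ.ncard = Nat.card (Torus 5 K) :=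
    Set.ncard_add_ncard_compl _
  have h2 : {P : Torus 5 K | cfun a b c d e P ≠ 0}ᶜ = {P : Torus 5 K | cfun a b c d e P = 0} := by
    ext P; simp
  rw [h2] at h1
  have h3 : {P : Torus 5 K | cfun a b c d e P = 0}.ncard
      = Nat.card {P : Torus 5 K // cfun a b c d e P = 0} :=
    (Nat.card_coe_set_eq _).symm
  rw [h3, card_zero_set, cardTorus] at h1
  have hZ : Zc a b c d e ≤ Nat.card Kˣ ^ 5 := by omega
  unfold wt
  omega

end Glue

section Repr
variable {K : Type} [Field K] [Fintype K] [DecidableEq K]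

lemma image_edges :
    ((fun e : Finset (Fin 5) => ∏ j ∈ e, (X j : MvPolynomial (Fin 5) K)) ''
        ({ {0, 1}, {1, 2}, {2, 3}, {3, 4}, {4, 0} } : Set (Finset (Fin 5))))
      = {X 0 * X 1, X 1 * X 2, X 2 * X 3, X 3 * X 4, X 4 * X 0} := by
  simp only [Set.image_insert_eq, Set.image_singleton]
  rw [Finset.prod_pair (by decide : (0 : Fin 5) ≠ 1),
    Finset.prod_pair (by decide : (1 : Fin 5) ≠ 2),
    Finset.prod_pair (by decide : (2 : Fin 5) ≠ 3),
    Finset.prod_pair (by decide : (3 : Fin 5) ≠ 4),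
    Finset.prod_pair (by decide : (4 : Fin 5) ≠ 0)]

lemma evalTorus_apply (f : MvPolynomial (Fin 5) K) (P : Torus 5 K) :
    evalTorus 5 K f P = aeval (P.1 : Fin 5 → K) f := rfl

lemma mem_edgeCode_repr (c : Torus 5 K → K)
    (hc : c ∈ edgeCode 5 K ({ {0, 1}, {1, 2}, {2, 3}, {3, 4}, {4, 0} } : Set (Finset (Fin 5)))) :
    ∃ a b c' d e : K, c = cfun a b c' d e := by
  obtain ⟨f, hf, rfl⟩ := hc
  rw [image_edges] at hf
  rw [SetLike.mem_coe] at hf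
  rw [Submodule.mem_span_insert] at hf
  obtain ⟨a, z1, hz1, rfl⟩ := hf
  rw [Submodule.mem_span_insert] at hz1
  obtain ⟨b, z2, hz2, rfl⟩ := hz1
  rw [Submodule.mem_span_insert] at hz2
  obtain ⟨c', z3, hz3, rfl⟩ := hz2
  rw [Submodule.mem_span_insert] at hz3
  obtain ⟨d, z4, hz4, rfl⟩ := hz3
  rw [Submodule.mem_span_singleton] at hz4
  obtain ⟨e, rfl⟩ := hz4
  refine ⟨a, b, c', d, e, ?_⟩
  funext P
  rw [evalTorus_apply]
  simp only [map_add, map_smul, map_mul, aeval_X, smul_eq_mul, cfun]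
  ring

lemma witness_mem :
    cfun (1 : K) (-1) 0 0 0
      ∈ edgeCode 5 K ({ {0, 1}, {1, 2}, {2, 3}, {3, 4}, {4, 0} } : Set (Finset (Fin 5))) := by
  refine ⟨X 0 * X 1 - X 1 * X 2, ?_, ?_⟩
  · rw [image_edges]
    apply sub_mem <;> apply Submodule.subset_span
    · exact Set.mem_insert _ _
    · exact Set.mem_insert_of_mem _ (Set.mem_insert _ _)
  · funext P
    rw [evalTorus_apply]
    simp only [map_sub, map_mul, aeval_X, cfun]
    ring

end Repr

/-- for `q ≥ 3`, the edge code of the cycle graph `C₅` on five vertices,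
with edges `{1,2}, {2,3}, {3,4}, {4,5}, {5,1}`, has minimum distance
`(q-1)^5 - (q-1)^4 = (q-2)(q-1)^4`. -/
theorem minDist_edgeCode_cycle_five
    (q : ℕ) (hq : 3 ≤ q)
    (K : Type) [Field K] [Fintype K] (hK : Fintype.card K = q) :
    minDist (edgeCode 5 K
        ({ {0, 1}, {1, 2}, {2, 3}, {3, 4}, {4, 0} } : Set (Finset (Fin 5))))
      = (q - 1) ^ 5 - (q - 1) ^ 4 ∧
    (q - 1) ^ 5 - (q - 1) ^ 4 = (q - 2) * (q - 1) ^ 4 := by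
  classical
  have hn : Nat.card Kˣ = q - 1 := by
    rw [Nat.card_units, Nat.card_eq_fintype_card, hK]
  have hn2 : 2 ≤ q - 1 := by omega
  have harith : (q - 1) ^ 5 - (q - 1) ^ 4 = (q - 2) * (q - 1) ^ 4 := by
    have hq1 : q - 1 = (q - 2) + 1 := by omega
    calc (q - 1) ^ 5 - (q - 1) ^ 4 = (q - 1) ^ 4 * (q - 1) - (q - 1) ^ 4 := by rw [pow_succ]
      _ = (q - 1) ^ 4 * ((q - 2) + 1) - (q - 1) ^ 4 := by rw [← hq1]
      _ = ((q - 1) ^ 4 * (q - 2) + (q - 1) ^ 4) - (q - 1) ^ 4 := by rw [Nat.mul_add, Nat.mul_one]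
      _ = (q - 1) ^ 4 * (q - 2) := by omega
      _ = (q - 2) * (q - 1) ^ 4 := Nat.mul_comm _ _
  have hwt : wt (cfun (1 : K) (-1) 0 0 0) = (q - 1) ^ 5 - (q - 1) ^ 4 := by
    rw [wt_cfun, Zc_witness, hn]
  have hwpos : 0 < (q - 1) ^ 5 - (q - 1) ^ 4 := by
    have h4 : 0 < (q - 1) ^ 4 := pow_pos (by omega) _
    have h5 : (q - 1) ^ 5 = (q - 1) * (q - 1) ^ 4 := by ring
    have h6 : 2 * (q - 1) ^ 4 ≤ (q - 1) * (q - 1) ^ 4 := Nat.mul_le_mul_right _ hn2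
    omega
  have hwitne : cfun (1 : K) (-1) 0 0 0 ≠ 0 := by
    intro h0
    rw [h0] at hwt
    have hz : wt (0 : Torus 5 K → K) = 0 := by
      unfold wt
      simp
    omega
  have hmem : (q - 1) ^ 5 - (q - 1) ^ 4 ∈
      {w : ℕ | ∃ c ∈ edgeCode 5 K
        ({ {0, 1}, {1, 2}, {2, 3}, {3, 4}, {4, 0} } : Set (Finset (Fin 5))),
          c ≠ 0 ∧ wt c = w} :=
    ⟨_, witness_mem, hwitne, hwt⟩
  have hlb : ∀ w ∈ {w : ℕ | ∃ c ∈ edgeCode 5 K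
        ({ {0, 1}, {1, 2}, {2, 3}, {3, 4}, {4, 0} } : Set (Finset (Fin 5))),
          c ≠ 0 ∧ wt c = w}, (q - 1) ^ 5 - (q - 1) ^ 4 ≤ w := by
    rintro w ⟨c, hcC, hc0, rfl⟩
    obtain ⟨a, b, c', d, e, rfl⟩ := mem_edgeCode_repr c hcC
    have hcoef : ¬(a = 0 ∧ b = 0 ∧ c' = 0 ∧ d = 0 ∧ e = 0) := by
      rintro ⟨rfl, rfl, rfl, rfl, rfl⟩
      apply hc0
      funext P
      simp [cfun]
    have hZle := Zc_le a b c' d e hcoef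
    rw [hn] at hZle
    rw [wt_cfun, hn]
    exact Nat.sub_le_sub_left hZle _
  refine ⟨?_, harith⟩
  unfold minDist
  exact le_antisymm (Nat.sInf_le hmem) (le_csInf ⟨_, hmem⟩ hlb)
end
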